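/- Let A be an associative unital ℝ-algebra, n a real number, and d, δ, x, y, Δ, N elements of A satisfying Δ·d = d·Δ, Δ·δ = δ·Δ, Δ·x − x·Δ = −2d, Δ·y − y·Δ = 2δ, and N·Δ − Δ·N = −2Δ. Define εD := d·(n·1 + 2N − 2·1) + x·Δ and ιD := −δ·(n·1 + 2N − 2·1) + y·Δ. Let M be a module over A and let ℓ be a natural number. Then: (i) if V ∈ M satisfies N·V = (ℓ − n/2 + 1)•V, then Δ^ℓ·(εD·V) = x·(Δ^{ℓ+1}·V) and Δ^ℓ·(ιD·V) = y·(Δ^{ℓ+1}·V); (ii) if U ∈ M satisfies N·U = (ℓ − n/2)•U, then εD·(Δ^ℓ·U) = Δ^{ℓ+1}·(x·U) and ιD·(Δ^ℓ·U) = Δ^{ℓ+1}·(y·U). Here Δ⁰ := 1. -/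
import Mathlib


/-- The operator `ε(𝔻) = d̃(n + 2∇_𝕏 − 2) + ε(𝕏)Δ̃` of Branson–Gover, modelled in
an abstract associative `ℝ`-algebra. -/
def epsD {A : Type*} [Ring A] [Algebra ℝ A] (n : ℝ) (d x Δ N : A) : A :=
  d * (n • (1 : A) + (2 : ℝ) • N - (2 : ℝ) • (1 : A)) + x * Δ

/-- The operator `ι(𝔻) = −δ̃(n + 2∇_𝕏 − 2) + ι(𝕏)Δ̃` of Branson–Gover, modelled in
an abstract associative `ℝ`-algebra. -/
def iotaD {A : Type*} [Ring A] [Algebra ℝ A] (n : ℝ) (δ y Δ N : A) : A :=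
  -(δ * (n • (1 : A) + (2 : ℝ) • N - (2 : ℝ) • (1 : A))) + y * Δ

/-- Key commutation: `Δ^k (aΔ) = a Δ^{k+1} + k b Δ^k` when `Δa = aΔ + b`, `Δb = bΔ`. -/
lemma BG_key {A : Type*} [Ring A] [Algebra ℝ A] (Δ a b : A)
    (hb : Δ * b = b * Δ) (ha : Δ * a = a * Δ + b) :
    ∀ k : ℕ, Δ ^ k * (a * Δ) = a * Δ ^ (k + 1) + (k : ℝ) • (b * Δ ^ k)
  | 0 => by simp [pow_succ]
  | (k + 1) => by
    have ih := BG_key Δ a b hb ha k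
    rw [pow_succ', mul_assoc, ih, mul_add, mul_smul_comm, ← mul_assoc, ← mul_assoc, ha, hb,
      add_mul, mul_assoc, mul_assoc, ← pow_succ', ← pow_succ']
    push_cast
    module

/-- Variant: `Δ^{k+1} a = a Δ^{k+1} + (k+1) b Δ^k`. -/
lemma BG_key2 {A : Type*} [Ring A] [Algebra ℝ A] (Δ a b : A)
    (hb : Δ * b = b * Δ) (ha : Δ * a = a * Δ + b) (k : ℕ) :
    Δ ^ (k + 1) * a = a * Δ ^ (k + 1) + ((k : ℝ) + 1) • (b * Δ ^ k) := by
  have hcb : Δ ^ k * b = b * Δ ^ k := ((Commute.pow_left (hb : Commute Δ b) k))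
  rw [pow_succ, mul_assoc, ha, mul_add, hcb, BG_key Δ a b hb ha k, ← pow_succ]
  module

/-- Weight operator versus powers of the Laplacian. -/
lemma BG_N {A : Type*} [Ring A] [Algebra ℝ A] (Δ N : A)
    (h₅ : N * Δ - Δ * N = -((2 : ℝ) • Δ)) :
    ∀ k : ℕ, N * Δ ^ k = Δ ^ k * N - ((2 : ℝ) * k) • Δ ^ k
  | 0 => by simp
  | (k + 1) => by
    have ih := BG_N Δ N h₅ k
    have h5 : N * Δ = -((2 : ℝ) • Δ) + Δ * N := sub_eq_iff_eq_add.mp h₅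
    rw [pow_succ, ← mul_assoc, ih, sub_mul, smul_mul_assoc, mul_assoc, h5, ← pow_succ,
      mul_add, mul_neg, mul_smul_comm, ← pow_succ, ← mul_assoc, ← pow_succ]
    push_cast
    module

/-- Scalars commute with the algebra action on the module. -/
lemma BG_sc {A : Type*} [Ring A] [Algebra ℝ A] {M : Type*} [AddCommGroup M] [Module ℝ M]
    [Module A M] [IsScalarTower ℝ A M] (a : A) (r : ℝ) (m : M) :
    a • (r • m) = r • (a • m) := by
  have h : r • m = (r • (1 : A)) • m := by rw [smul_assoc, one_smul]
  rw [h, ← mul_smul, mul_smul_comm, mul_one, smul_assoc]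

/-- Lemma 4.1 of Branson–Gover: for `V` of weight `ℓ − n/2 + 1` one has
`Δ̃^ℓ ε(𝔻) V = ε(𝕏) Δ̃^{ℓ+1} V` and `Δ̃^ℓ ι(𝔻) V = ι(𝕏) Δ̃^{ℓ+1} V`, and for `U`
of weight `ℓ − n/2` one has `ε(𝔻) Δ̃^ℓ U = Δ̃^{ℓ+1} ε(𝕏) U` and
`ι(𝔻) Δ̃^ℓ U = Δ̃^{ℓ+1} ι(𝕏) U`. -/
theorem stmt_15
    {A : Type*} [Ring A] [Algebra ℝ A]
    (n : ℝ) (d δ x y Δ N : A)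
    (h₁ : Δ * d = d * Δ) (h₂ : Δ * δ = δ * Δ)
    (h₃ : Δ * x - x * Δ = -((2 : ℝ) • d))
    (h₄ : Δ * y - y * Δ = (2 : ℝ) • δ)
    (h₅ : N * Δ - Δ * N = -((2 : ℝ) • Δ))
    (M : Type*) [AddCommGroup M] [Module ℝ M] [Module A M] [IsScalarTower ℝ A M]
    (ℓ : ℕ) :
    (∀ V : M, N • V = ((ℓ : ℝ) - n / 2 + 1) • V →
      (Δ ^ ℓ) • (epsD n d x Δ N • V) = x • ((Δ ^ (ℓ + 1)) • V) ∧
      (Δ ^ ℓ) • (iotaD n δ y Δ N • V) = y • ((Δ ^ (ℓ + 1)) • V)) ∧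
    (∀ U : M, N • U = ((ℓ : ℝ) - n / 2) • U →
      epsD n d x Δ N • ((Δ ^ ℓ) • U) = (Δ ^ (ℓ + 1)) • (x • U) ∧
      iotaD n δ y Δ N • ((Δ ^ ℓ) • U) = (Δ ^ (ℓ + 1)) • (y • U)) := by
  have hx : Δ * x = x * Δ + -((2 : ℝ) • d) := by rw [← h₃]; abel
  have hy : Δ * y = y * Δ + (2 : ℝ) • δ := by rw [← h₄]; abel
  have hbx : Δ * -((2 : ℝ) • d) = -((2 : ℝ) • d) * Δ := by
    rw [mul_neg, mul_smul_comm, h₁, neg_mul, smul_mul_assoc]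
  have hby : Δ * ((2 : ℝ) • δ) = ((2 : ℝ) • δ) * Δ := by
    rw [mul_smul_comm, h₂, smul_mul_assoc]
  -- action of the zeroth-order factor on a weight vector
  have hC : ∀ (m : M) (w : ℝ), N • m = w • m →
      (n • (1 : A) + (2 : ℝ) • N - (2 : ℝ) • (1 : A)) • m = (n + 2 * w - 2) • m := by
    intro m w hw
    rw [sub_smul, add_smul, smul_assoc, smul_assoc, smul_assoc, one_smul, hw, smul_smul]
    module
  have heps : ∀ (m : M) (w : ℝ), N • m = w • m →
      epsD n d x Δ N • m = ((n + 2 * w - 2) • d + x * Δ) • m := by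
    intro m w hw
    rw [epsD, add_smul, add_smul, mul_smul, hC m w hw, BG_sc, smul_assoc]
  have hiota : ∀ (m : M) (w : ℝ), N • m = w • m →
      iotaD n δ y Δ N • m = ((-(n + 2 * w - 2)) • δ + y * Δ) • m := by
    intro m w hw
    rw [iotaD, add_smul, add_smul, neg_smul, mul_smul, hC m w hw, BG_sc, neg_smul, neg_smul,
      smul_assoc]
  constructor
  · intro V hV
    constructor
    · have halg : Δ ^ ℓ * ((n + 2 * ((ℓ : ℝ) - n / 2 + 1) - 2) • d + x * Δ) = x * Δ ^ (ℓ + 1) := by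
        have hco : n + 2 * ((ℓ : ℝ) - n / 2 + 1) - 2 = 2 * ℓ := by ring
        have hΔd : Δ ^ ℓ * d = d * Δ ^ ℓ := Commute.pow_left (h₁ : Commute Δ d) ℓ
        have hkey := BG_key Δ x (-((2 : ℝ) • d)) hbx hx ℓ
        rw [hco, mul_add, mul_smul_comm, hΔd, hkey]
        simp only [neg_mul, smul_mul_assoc, smul_neg, smul_smul]
        module
      rw [heps V _ hV, ← mul_smul, halg, mul_smul]
    · have halg : Δ ^ ℓ * ((-(n + 2 * ((ℓ : ℝ) - n / 2 + 1) - 2)) • δ + y * Δ)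
          = y * Δ ^ (ℓ + 1) := by
        have hco : -(n + 2 * ((ℓ : ℝ) - n / 2 + 1) - 2) = -(2 * ℓ) := by ring
        have hΔδ : Δ ^ ℓ * δ = δ * Δ ^ ℓ := Commute.pow_left (h₂ : Commute Δ δ) ℓ
        have hkey := BG_key Δ y ((2 : ℝ) • δ) hby hy ℓ
        rw [hco, mul_add, mul_smul_comm, hΔδ, hkey]
        simp only [neg_mul, smul_mul_assoc, smul_neg, smul_smul]
        module
      rw [hiota V _ hV, ← mul_smul, halg, mul_smul]
  · intro U hU
    have hW : N • ((Δ ^ ℓ) • U) = (-(ℓ : ℝ) - n / 2) • ((Δ ^ ℓ) • U) := by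
      rw [← mul_smul, BG_N Δ N h₅ ℓ, sub_smul, mul_smul, hU, BG_sc, smul_assoc, ← sub_smul]
      congr 1
      ring
    constructor
    · have halg : ((n + 2 * (-(ℓ : ℝ) - n / 2) - 2) • d + x * Δ) * Δ ^ ℓ = Δ ^ (ℓ + 1) * x := by
        have hco : n + 2 * (-(ℓ : ℝ) - n / 2) - 2 = -(2 * ℓ + 2) := by ring
        have hkey := BG_key2 Δ x (-((2 : ℝ) • d)) hbx hx ℓ
        rw [hco, hkey, add_mul, smul_mul_assoc, mul_assoc, ← pow_succ']
        simp only [neg_mul, smul_mul_assoc, smul_neg, smul_smul, neg_smul]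
        module
      rw [heps _ _ hW, ← mul_smul, halg, mul_smul]
    · have halg : ((-(n + 2 * (-(ℓ : ℝ) - n / 2) - 2)) • δ + y * Δ) * Δ ^ ℓ
          = Δ ^ (ℓ + 1) * y := by
        have hco : -(n + 2 * (-(ℓ : ℝ) - n / 2) - 2) = 2 * ℓ + 2 := by ring
        have hkey := BG_key2 Δ y ((2 : ℝ) • δ) hby hy ℓ
        rw [hco, hkey, add_mul, smul_mul_assoc, mul_assoc, ← pow_succ']
        simp only [neg_mul, smul_mul_assoc, smul_neg, smul_smul, neg_smul]
        module
      rw [hiota _ _ hW, ← mul_smul, halg, mul_smul]
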